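/- arXiv:2412.14956 — 2 statements merged into one kernel-verified Lean document; each statement's English description precedes it below -/
import Mathlib

section
/- Let f : (0,∞) → ℝ be twice continuously differentiable and suppose there exist β ≥ 0 and M > 0 such that |f(x)| ≤ M e^{β|log x|}, |f′(x)| ≤ M e^{β|log x|}, and |(x²/2) f″(x)| ≤ M e^{β|log x|} for all x > 0. Then for every t > 0 and x > 0, the function x ↦ ∫₀^∞ f(w) p_GBM(t, w; x) dw is twice differentiable and (x²/2) ∂²_x ∫₀^∞ f(w) p_GBM(t, w; x) dw = ∫₀^∞ (w²/2) f″(w) p_GBM(t, w; x) dw; in particular the Black–Scholes operator G = (x²/2)∂²_x commutes with the kernel operator: G P_t f = P_t G f. -/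
open MeasureTheory Set

/-- Heat kernel `p(t,x) = (2πt)^{-1/2} e^{-x²/(2t)}`. -/
noncomputable def heatK (t x : ℝ) : ℝ :=
  (Real.sqrt (2 * Real.pi * t))⁻¹ * Real.exp (-x ^ 2 / (2 * t))

/-- Geometric Brownian motion transition kernel
`p_GBM(t,w;x) = x^{1/2} e^{-t/8} p(t, log w − log x) w^{-3/2}`. -/
noncomputable def pGBM (t w x : ℝ) : ℝ :=
  Real.sqrt x * Real.exp (-t / 8) * heatK t (Real.log w - Real.log x) * w ^ (-(3 : ℝ) / 2)

/-- Auxiliary kernel after the substitution `w = x e^y`. -/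
noncomputable def kk (t y : ℝ) : ℝ :=
  Real.exp (-t / 8) * heatK t y * Real.exp (-y / 2)

lemma heatK_nonneg (t y : ℝ) : 0 ≤ heatK t y := by
  unfold heatK; positivity

lemma kk_nonneg (t y : ℝ) : 0 ≤ kk t y := by
  unfold kk
  have := heatK_nonneg t y
  positivity

lemma heatK_continuous (t : ℝ) : Continuous (heatK t) := by
  unfold heatK; fun_prop

lemma kk_continuous (t : ℝ) : Continuous (kk t) := by
  unfold kk
  have := heatK_continuous t
  fun_prop

/-- Exponentials of `|y|` times the heat kernel are integrable. -/
lemma integrable_exp_abs_mul_heatK {t : ℝ} (ht : 0 < t) (c : ℝ) :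
    Integrable (fun y : ℝ => Real.exp (c * |y|) * heatK t y) := by
  have h4t : (0 : ℝ) < 1 / (4 * t) := by positivity
  have hin : Integrable (fun y : ℝ =>
      ((Real.sqrt (2 * Real.pi * t))⁻¹ * Real.exp (t * c ^ 2)) *
        Real.exp (-(1 / (4 * t)) * y ^ 2)) :=
    (integrable_exp_neg_mul_sq h4t).const_mul _
  refine hin.mono' ?_ (ae_of_all _ fun y => ?_)
  · apply Continuous.aestronglyMeasurable
    have := heatK_continuous t
    fun_prop
  · have hKnn : 0 ≤ heatK t y := heatK_nonneg t y
    rw [Real.norm_eq_abs, abs_of_nonneg (mul_nonneg (Real.exp_pos _).le hKnn)]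
    unfold heatK
    have lhs_eq : Real.exp (c * |y|) * ((Real.sqrt (2 * Real.pi * t))⁻¹ *
        Real.exp (-y ^ 2 / (2 * t)))
        = (Real.sqrt (2 * Real.pi * t))⁻¹ * Real.exp (c * |y| + -y ^ 2 / (2 * t)) := by
      rw [Real.exp_add]; ring
    have rhs_eq : (Real.sqrt (2 * Real.pi * t))⁻¹ * Real.exp (t * c ^ 2) *
        Real.exp (-(1 / (4 * t)) * y ^ 2)
        = (Real.sqrt (2 * Real.pi * t))⁻¹ * Real.exp (t * c ^ 2 + -(1 / (4 * t)) * y ^ 2) := by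
      rw [Real.exp_add]; ring
    rw [lhs_eq, rhs_eq]
    have key : c * |y| + -y ^ 2 / (2 * t) ≤ t * c ^ 2 + -(1 / (4 * t)) * y ^ 2 := by
      have h1 : c * |y| ≤ t * c ^ 2 + y ^ 2 / (4 * t) := by
        rw [← sub_nonneg]
        have h2 : (0:ℝ) ≤ (|y| - 2 * t * c) ^ 2 := sq_nonneg _
        have h3 : t * c ^ 2 + y ^ 2 / (4 * t) - c * |y| = (|y| - 2 * t * c) ^ 2 / (4 * t) := by
          field_simp
          nlinarith [sq_abs y]
        rw [h3]
        positivity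
      have e1 : -y ^ 2 / (2 * t) = -(2 * (y ^ 2 / (4 * t))) := by field_simp; ring
      have e2 : -(1 / (4 * t)) * y ^ 2 = -(y ^ 2 / (4 * t)) := by ring
      rw [e1, e2]
      linarith
    exact mul_le_mul_of_nonneg_left (Real.exp_le_exp.2 key)
      (inv_nonneg.2 (Real.sqrt_nonneg _))

lemma integrable_dom {t : ℝ} (ht : 0 < t) {F : ℝ → ℝ}
    (hF : AEStronglyMeasurable F (volume : Measure ℝ)) (C a : ℝ)
    (h : ∀ y, ‖F y‖ ≤ C * (Real.exp (a * |y|) * heatK t y)) : Integrable F := by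
  refine Integrable.mono' ?_ hF (ae_of_all _ h)
  have := (integrable_exp_abs_mul_heatK ht a).const_mul C
  simpa [mul_assoc] using this

/-- Key algebraic identity: the Jacobian factor times the kernel simplifies. -/
lemma pGBM_subst {t x y : ℝ} (hx : 0 < x) :
    x * Real.exp y * pGBM t (x * Real.exp y) x = kk t y := by
  have hE : (0:ℝ) < Real.exp y := Real.exp_pos y
  unfold pGBM kk
  rw [Real.log_mul hx.ne' hE.ne', Real.log_exp,
    Real.mul_rpow hx.le hE.le, Real.rpow_def_of_pos hE, Real.log_exp]
  have hlog : Real.log x + y - Real.log x = y := by ring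
  rw [hlog, Real.sqrt_eq_rpow]
  have hxpow : x * (x ^ ((1:ℝ) / 2) * x ^ (-(3:ℝ) / 2)) = 1 := by
    rw [← Real.rpow_add hx, show (1:ℝ)/2 + -(3:ℝ)/2 = -1 by norm_num, Real.rpow_neg_one]
    exact mul_inv_cancel₀ hx.ne'
  have hexp : Real.exp y * Real.exp (y * (-(3:ℝ) / 2)) = Real.exp (-y / 2) := by
    rw [← Real.exp_add]; congr 1; ring
  calc x * Real.exp y *
        (x ^ ((1:ℝ)/2) * Real.exp (-t/8) * heatK t y * (x ^ (-(3:ℝ)/2) * Real.exp (y * (-(3:ℝ)/2))))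
      = (x * (x ^ ((1:ℝ)/2) * x ^ (-(3:ℝ)/2))) * (Real.exp y * Real.exp (y * (-(3:ℝ)/2))) *
          (Real.exp (-t/8) * heatK t y) := by ring
    _ = Real.exp (-t/8) * heatK t y * Real.exp (-y/2) := by rw [hxpow, hexp]; ring

/-- Change of variables `w = x e^y` in the `pGBM` integral. -/
lemma integral_pGBM_subst {t x : ℝ} (hx : 0 < x) (G : ℝ → ℝ) :
    ∫ w in Ioi (0:ℝ), G w * pGBM t w x = ∫ y : ℝ, G (x * Real.exp y) * kk t y := by
  have himg : (fun y : ℝ => x * Real.exp y) '' univ = Ioi 0 := by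
    rw [image_univ]
    ext w
    simp only [mem_range, mem_Ioi]
    constructor
    · rintro ⟨y, rfl⟩; positivity
    · intro hw
      refine ⟨Real.log (w / x), ?_⟩
      rw [Real.exp_log (by positivity)]
      field_simp
  have hderiv : ∀ y ∈ (univ : Set ℝ),
      HasDerivWithinAt (fun y : ℝ => x * Real.exp y) (x * Real.exp y) univ y :=
    fun y _ => ((Real.hasDerivAt_exp y).const_mul x).hasDerivWithinAt
  have hinj : InjOn (fun y : ℝ => x * Real.exp y) univ := by
    intro a _ b _ h
    exact Real.exp_injective (mul_left_cancel₀ hx.ne' h)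
  have h := integral_image_eq_integral_abs_deriv_smul MeasurableSet.univ hderiv hinj
    (fun w => G w * pGBM t w x)
  rw [himg, Measure.restrict_univ] at h
  rw [h]
  congr 1
  funext y
  have hpos : (0:ℝ) < x * Real.exp y := by positivity
  rw [smul_eq_mul, abs_of_pos hpos]
  rw [show x * Real.exp y * (G (x * Real.exp y) * pGBM t (x * Real.exp y) x)
      = G (x * Real.exp y) * (x * Real.exp y * pGBM t (x * Real.exp y) x) by ring,
    pGBM_subst hx]

/-- Pointwise domination of the integrands. -/
lemma pointwise_dom {t K b c L m x y : ℝ} (ht : 0 ≤ t) (hK : 0 ≤ K) (hb : 0 ≤ b)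
    (hx : 0 < x) (hL : |Real.log x| ≤ L) {G : ℝ → ℝ}
    (hbd : ∀ w, 0 < w → |G w| ≤ K * Real.exp (b * |Real.log w|) * Real.exp (c * Real.log w)) :
    |G (x * Real.exp y)| * (Real.exp (m * y) * kk t y)
      ≤ (K * Real.exp ((b + |c|) * L)) *
          (Real.exp ((b + |c| + |m| + 1/2) * |y|) * heatK t y) := by
  have hxe : (0:ℝ) < x * Real.exp y := by positivity
  have hkk : 0 ≤ kk t y := kk_nonneg t y
  have hHK : 0 ≤ heatK t y := heatK_nonneg t y
  have h1 : |G (x * Real.exp y)|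
      ≤ K * Real.exp (b * |Real.log x + y| + c * (Real.log x + y)) := by
    have h := hbd _ hxe
    rwa [Real.log_mul hx.ne' (Real.exp_pos y).ne', Real.log_exp, mul_assoc,
      ← Real.exp_add] at h
  have h2 : |G (x * Real.exp y)| * (Real.exp (m * y) * kk t y)
      ≤ (K * Real.exp (b * |Real.log x + y| + c * (Real.log x + y))) *
          (Real.exp (m * y) * kk t y) := by
    have : 0 ≤ Real.exp (m * y) * kk t y := mul_nonneg (Real.exp_pos _).le hkk
    exact mul_le_mul_of_nonneg_right h1 this
  refine h2.trans ?_
  unfold kk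
  have h3 : (K * Real.exp (b * |Real.log x + y| + c * (Real.log x + y))) *
      (Real.exp (m * y) * (Real.exp (-t/8) * heatK t y * Real.exp (-y/2)))
      = K * Real.exp (b * |Real.log x + y| + c * (Real.log x + y) + m * y + -t/8 + -y/2) *
          heatK t y := by
    simp only [Real.exp_add]; ring
  have h4 : (K * Real.exp ((b + |c|) * L)) *
      (Real.exp ((b + |c| + |m| + 1/2) * |y|) * heatK t y)
      = K * Real.exp ((b + |c|) * L + (b + |c| + |m| + 1/2) * |y|) * heatK t y := by
    simp only [Real.exp_add]; ring
  rw [h3, h4]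
  have habs : |Real.log x + y| ≤ L + |y| := (abs_add_le _ _).trans (add_le_add_left hL _)
  have hc : c * (Real.log x + y) ≤ |c| * (L + |y|) := by
    calc c * (Real.log x + y) ≤ |c * (Real.log x + y)| := le_abs_self _
      _ = |c| * |Real.log x + y| := abs_mul _ _
      _ ≤ |c| * (L + |y|) := mul_le_mul_of_nonneg_left habs (abs_nonneg c)
  have hm : m * y ≤ |m| * |y| := by
    calc m * y ≤ |m * y| := le_abs_self _
      _ = |m| * |y| := abs_mul _ _
  have hb' : b * |Real.log x + y| ≤ b * (L + |y|) := mul_le_mul_of_nonneg_left habs hb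
  have hy : -y / 2 ≤ |y| / 2 := by
    have := neg_abs_le y
    linarith
  have hexp : b * |Real.log x + y| + c * (Real.log x + y) + m * y + -t/8 + -y/2
      ≤ (b + |c|) * L + (b + |c| + |m| + 1/2) * |y| := by
    nlinarith [hb', hc, hm, hy, abs_nonneg y, ht]
  exact mul_le_mul_of_nonneg_right
    (mul_le_mul_of_nonneg_left (Real.exp_le_exp.2 hexp) hK) hHK

lemma aesm_integrand {t m : ℝ} {g : ℝ → ℝ} (hgc : ContinuousOn g (Ioi 0)) {x : ℝ}
    (hx : 0 < x) :
    AEStronglyMeasurable (fun y : ℝ => g (x * Real.exp y) * (Real.exp (m * y) * kk t y))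
      (volume : Measure ℝ) := by
  apply Continuous.aestronglyMeasurable
  have h1 : Continuous fun y : ℝ => g (x * Real.exp y) := by
    refine hgc.comp_continuous (by fun_prop) fun y => ?_
    exact mem_Ioi.2 (by positivity)
  have h2 : Continuous fun y : ℝ => Real.exp (m * y) := by fun_prop
  exact h1.mul (h2.mul (kk_continuous t))

/-- Differentiation under the integral sign for the substituted kernel. -/
lemma hasDerivAt_integral_kk {t : ℝ} (ht : 0 < t) (m : ℝ)
    (g g' : ℝ → ℝ)
    (hg : ∀ w : ℝ, 0 < w → HasDerivAt g (g' w) w)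
    (hg'c : ContinuousOn g' (Ioi 0))
    (K₀ b₀ c₀ : ℝ) (hK₀ : 0 ≤ K₀) (hb₀ : 0 ≤ b₀)
    (hbd : ∀ w : ℝ, 0 < w →
      |g w| ≤ K₀ * Real.exp (b₀ * |Real.log w|) * Real.exp (c₀ * Real.log w))
    (K b c : ℝ) (hK : 0 ≤ K) (hb : 0 ≤ b)
    (hbd' : ∀ w : ℝ, 0 < w →
      |g' w| ≤ K * Real.exp (b * |Real.log w|) * Real.exp (c * Real.log w))
    (z : ℝ) (hz : 0 < z) :
    HasDerivAt (fun x => ∫ y : ℝ, g (x * Real.exp y) * (Real.exp (m * y) * kk t y))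
      (∫ y : ℝ, g' (z * Real.exp y) * Real.exp y * (Real.exp (m * y) * kk t y)) z := by
  have hgc : ContinuousOn g (Ioi 0) := fun w hw =>
    ((hg w hw).differentiableAt.continuousAt).continuousWithinAt
  set L : ℝ := |Real.log (z/2)| + |Real.log (2*z)| with hLdef
  have hball : ∀ x ∈ Metric.ball z (z/2), 0 < x ∧ |Real.log x| ≤ L := by
    intro x hx'
    rw [Metric.mem_ball, Real.dist_eq, abs_sub_lt_iff] at hx'
    have h1 : z/2 < x := by linarith [hx'.2]
    have h2 : x < 2*z := by linarith [hx'.1]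
    have hx0 : (0:ℝ) < x := lt_trans (by positivity) h1
    refine ⟨hx0, abs_le.2 ⟨?_, ?_⟩⟩
    · have hl : Real.log (z/2) ≤ Real.log x := Real.log_le_log (by positivity) h1.le
      have := neg_abs_le (Real.log (z/2))
      have := abs_nonneg (Real.log (2*z))
      simp only [hLdef]; linarith
    · have hl : Real.log x ≤ Real.log (2*z) := Real.log_le_log hx0 h2.le
      have := le_abs_self (Real.log (2*z))
      have := abs_nonneg (Real.log (z/2))
      simp only [hLdef]; linarith
  have hmeas : ∀ x : ℝ, 0 < x →
      AEStronglyMeasurable (fun y : ℝ => g (x * Real.exp y) * (Real.exp (m * y) * kk t y))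
        (volume : Measure ℝ) := fun x hx => aesm_integrand hgc hx
  have key := hasDerivAt_integral_of_dominated_loc_of_deriv_le
    (F := fun x y => g (x * Real.exp y) * (Real.exp (m * y) * kk t y))
    (F' := fun x y => g' (x * Real.exp y) * Real.exp y * (Real.exp (m * y) * kk t y))
    (μ := (volume : Measure ℝ)) (x₀ := z)
    (bound := fun y => (K * Real.exp ((b + |c|) * L)) *
      (Real.exp ((b + |c| + |m + 1| + 1/2) * |y|) * heatK t y))
    (Metric.ball_mem_nhds z (half_pos hz))
    ?_ ?_ ?_ ?_ ?_ ?_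
  · exact key.2
  · -- eventual measurability
    filter_upwards [Metric.ball_mem_nhds z (half_pos hz)] with x hx'
    exact hmeas x (hball x hx').1
  · -- integrability at z
    refine integrable_dom ht (hmeas z hz) (K₀ * Real.exp ((b₀ + |c₀|) * |Real.log z|))
      (b₀ + |c₀| + |m| + 1/2) fun y => ?_
    have hnn : 0 ≤ Real.exp (m * y) * kk t y :=
      mul_nonneg (Real.exp_pos _).le (kk_nonneg t y)
    rw [Real.norm_eq_abs, abs_mul, abs_of_nonneg hnn]
    exact pointwise_dom ht.le hK₀ hb₀ hz le_rfl hbd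
  · -- measurability of F' z
    apply Continuous.aestronglyMeasurable
    have h1 : Continuous fun y : ℝ => g' (z * Real.exp y) := by
      refine hg'c.comp_continuous (by fun_prop) fun y => ?_
      exact mem_Ioi.2 (by positivity)
    have h2 : Continuous fun y : ℝ => Real.exp (m * y) := by fun_prop
    exact (h1.mul Real.continuous_exp).mul (h2.mul (kk_continuous t))
  · -- bound on F'
    refine ae_of_all _ fun y x hx' => ?_
    obtain ⟨hx0, hLx⟩ := hball x hx'
    have hnn : 0 ≤ Real.exp (m * y) * kk t y :=
      mul_nonneg (Real.exp_pos _).le (kk_nonneg t y)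
    have hrw : ‖g' (x * Real.exp y) * Real.exp y * (Real.exp (m * y) * kk t y)‖
        = |g' (x * Real.exp y)| * (Real.exp ((m + 1) * y) * kk t y) := by
      rw [Real.norm_eq_abs, abs_mul, abs_mul, abs_of_pos (Real.exp_pos y),
        abs_of_nonneg hnn]
      rw [show (m + 1) * y = m * y + y by ring, Real.exp_add]
      ring
    rw [hrw]
    exact pointwise_dom ht.le hK hb hx0 hLx hbd'
  · -- integrability of bound
    have := (integrable_exp_abs_mul_heatK ht (b + |c| + |m + 1| + 1/2)).const_mul
      (K * Real.exp ((b + |c|) * L))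
    simpa [mul_assoc] using this
  · -- differentiability
    refine ae_of_all _ fun y x hx' => ?_
    have hx0 : 0 < x := (hball x hx').1
    have h1 : HasDerivAt (fun x : ℝ => x * Real.exp y) (Real.exp y) x := by
      simpa using (hasDerivAt_id x).mul_const (Real.exp y)
    have h2 : HasDerivAt (fun x : ℝ => g (x * Real.exp y))
        (g' (x * Real.exp y) * Real.exp y) x :=
      (hg _ (by positivity)).comp x h1
    exact h2.mul_const (Real.exp (m * y) * kk t y)

/-- If `f ∈ C²(0,∞)` and `f`, `f′`, `(x²/2) f″` all grow at most like
`M e^{β|log x|}`, then for every `t > 0` and `x > 0` the function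
`P_t f(x) = ∫₀^∞ f(w) p_GBM(t,w;x) dw` is twice differentiable at `x` and the
Black–Scholes operator `G = (x²/2)∂²ₓ` commutes with the kernel operator:
`G P_t f(x) = P_t (G f)(x)`. -/
theorem kernel_commutes_with_BS_operator
    (β M : ℝ) (hβ : 0 ≤ β) (hM : 0 < M)
    (f : ℝ → ℝ) (hf : ContDiffOn ℝ 2 f (Set.Ioi (0 : ℝ)))
    (hbd₀ : ∀ x : ℝ, 0 < x → |f x| ≤ M * Real.exp (β * |Real.log x|))
    (hbd₁ : ∀ x : ℝ, 0 < x → |deriv f x| ≤ M * Real.exp (β * |Real.log x|))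
    (hbd₂ : ∀ x : ℝ, 0 < x →
      |x ^ 2 / 2 * deriv (deriv f) x| ≤ M * Real.exp (β * |Real.log x|)) :
    ∀ t : ℝ, 0 < t → ∀ x : ℝ, 0 < x →
      DifferentiableAt ℝ (fun z => ∫ w in Set.Ioi (0 : ℝ), f w * pGBM t w z) x
      ∧ DifferentiableAt ℝ (deriv (fun z => ∫ w in Set.Ioi (0 : ℝ), f w * pGBM t w z)) x
      ∧ x ^ 2 / 2 * deriv (deriv (fun z => ∫ w in Set.Ioi (0 : ℝ), f w * pGBM t w z)) x
          = ∫ w in Set.Ioi (0 : ℝ), w ^ 2 / 2 * deriv (deriv f) w * pGBM t w x := by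
  intro t ht x hx
  have hopen : IsOpen (Ioi (0:ℝ)) := isOpen_Ioi
  set P : ℝ → ℝ := fun z => ∫ w in Set.Ioi (0:ℝ), f w * pGBM t w z with hPdef
  -- basic differentiability facts
  have hf1 : ∀ w : ℝ, 0 < w → HasDerivAt f (deriv f w) w := fun w hw =>
    ((hf.contDiffAt (hopen.mem_nhds hw)).differentiableAt (by norm_num)).hasDerivAt
  have hdf : ContDiffOn ℝ 1 (deriv f) (Ioi 0) := hf.deriv_of_isOpen hopen (by norm_num)
  have hf2 : ∀ w : ℝ, 0 < w → HasDerivAt (deriv f) (deriv (deriv f) w) w := fun w hw =>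
    ((hdf.contDiffAt (hopen.mem_nhds hw)).differentiableAt (by norm_num)).hasDerivAt
  have hddfc : ContinuousOn (deriv (deriv f)) (Ioi 0) :=
    (hdf.deriv_of_isOpen hopen (m := 0) (by norm_num)).continuousOn
  have hdfc : ContinuousOn (deriv f) (Ioi 0) := hdf.continuousOn
  -- bounds in standard form
  have hbd₀' : ∀ w : ℝ, 0 < w →
      |f w| ≤ M * Real.exp (β * |Real.log w|) * Real.exp (0 * Real.log w) := by
    intro w hw; simpa using hbd₀ w hw
  have hbd₁' : ∀ w : ℝ, 0 < w →
      |deriv f w| ≤ M * Real.exp (β * |Real.log w|) * Real.exp (0 * Real.log w) := by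
    intro w hw; simpa using hbd₁ w hw
  have hbd₂' : ∀ w : ℝ, 0 < w →
      |deriv (deriv f) w| ≤ (2*M) * Real.exp (β * |Real.log w|) *
        Real.exp ((-2) * Real.log w) := by
    intro w hw
    have h := hbd₂ w hw
    have hw2 : (0:ℝ) < w ^ 2 / 2 := by positivity
    rw [abs_mul, abs_of_pos hw2] at h
    have hexp : Real.exp ((-2) * Real.log w) = (w ^ 2)⁻¹ := by
      rw [show (-2:ℝ) * Real.log w = -(Real.log w + Real.log w) by ring, Real.exp_neg,
        Real.exp_add, Real.exp_log hw]
      congr 1; ring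
    rw [hexp]
    rw [div_mul_eq_mul_div, div_le_iff₀ (by norm_num : (0:ℝ) < 2)] at h
    have hne : (w:ℝ) ^ 2 ≠ 0 := by positivity
    rw [mul_comm (w ^ 2)] at h
    calc |deriv (deriv f) w| = |deriv (deriv f) w| * w ^ 2 * (w ^ 2)⁻¹ := by
          field_simp
      _ ≤ M * Real.exp (β * |Real.log w|) * 2 * (w ^ 2)⁻¹ := by
          apply mul_le_mul_of_nonneg_right h (by positivity)
      _ = 2 * M * Real.exp (β * |Real.log w|) * (w ^ 2)⁻¹ := by ring
  -- the substituted integrals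
  set Q₁ : ℝ → ℝ := fun z => ∫ y : ℝ, deriv f (z * Real.exp y) *
    (Real.exp ((1:ℝ) * y) * kk t y) with hQ₁def
  -- first derivative
  have hstep1 : ∀ z : ℝ, 0 < z → HasDerivAt P (Q₁ z) z := by
    intro z hz
    have h := hasDerivAt_integral_kk ht 0 f (deriv f) hf1 hdfc
      M β 0 hM.le hβ hbd₀' M β 0 hM.le hβ hbd₁' z hz
    have hP : P =ᶠ[nhds z] fun x => ∫ y : ℝ, f (x * Real.exp y) *
        (Real.exp ((0:ℝ) * y) * kk t y) := by
      filter_upwards [hopen.mem_nhds hz] with w hw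
      simp only [hPdef, zero_mul, Real.exp_zero, one_mul]
      exact integral_pGBM_subst hw f
    have h' := h.congr_of_eventuallyEq hP
    have heq : Q₁ z = ∫ y : ℝ, deriv f (z * Real.exp y) * Real.exp y *
        (Real.exp ((0:ℝ) * y) * kk t y) := by
      simp only [hQ₁def, zero_mul, one_mul, mul_one, Real.exp_zero, mul_assoc]
    rw [heq]
    exact h'
  have hderivP : ∀ z : ℝ, 0 < z → deriv P z = Q₁ z := fun z hz => (hstep1 z hz).deriv
  -- second derivative
  have hstep2 : HasDerivAt Q₁ (∫ y : ℝ, deriv (deriv f) (x * Real.exp y) * Real.exp y *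
      (Real.exp ((1:ℝ) * y) * kk t y)) x := by
    have h := hasDerivAt_integral_kk ht 1 (deriv f) (deriv (deriv f)) hf2 hddfc
      M β 0 hM.le hβ hbd₁' (2*M) β (-2) (by linarith) hβ hbd₂' x hx
    rw [hQ₁def]
    exact h
  have hQ₁eq : deriv P =ᶠ[nhds x] Q₁ := by
    filter_upwards [hopen.mem_nhds hx] with z hz
    exact hderivP z hz
  have hstep2' : HasDerivAt (deriv P)
      (∫ y : ℝ, deriv (deriv f) (x * Real.exp y) * Real.exp y *
        (Real.exp ((1:ℝ) * y) * kk t y)) x :=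
    hstep2.congr_of_eventuallyEq hQ₁eq
  refine ⟨(hstep1 x hx).differentiableAt, hstep2'.differentiableAt, ?_⟩
  rw [hstep2'.deriv]
  rw [integral_pGBM_subst hx (fun w => w ^ 2 / 2 * deriv (deriv f) w)]
  rw [← MeasureTheory.integral_const_mul]
  apply integral_congr_ae
  filter_upwards with y
  simp only [one_mul]
  ring
end

section
/- For all t > 0, w > 0 and x > 0 the geometric Brownian motion transition kernel satisfies the adjoint identity (x²/2) ∂²_x p_GBM(t, w; x) = ∂²_w ( (w²/2) p_GBM(t, w; x) ), where both sides are classical partial derivatives. -/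
open MeasureTheory Set

lemma heatK_hasDerivAt {t : ℝ} (ht : 0 < t) (u : ℝ) :
    HasDerivAt (heatK t) (heatK t u * (-u / t)) u := by
  have h1 : HasDerivAt (fun u : ℝ => -u ^ 2 / (2 * t)) (-u / t) u := by
    have h := ((hasDerivAt_pow 2 u).neg).div_const (2 * t)
    refine h.congr_deriv ?_
    field_simp
    ring
  have h2 := (h1.exp).const_mul (Real.sqrt (2 * Real.pi * t))⁻¹
  have he : heatK t = fun u : ℝ => (Real.sqrt (2 * Real.pi * t))⁻¹ * Real.exp (-u ^ 2 / (2 * t)) := rfl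
  rw [he]
  refine h2.congr_deriv ?_
  simp only []
  ring

lemma pGBM_x_hasDerivAt (t w : ℝ) (ht : 0 < t) {z : ℝ} (hz : 0 < z) :
    HasDerivAt (fun z => pGBM t w z)
      (w ^ (-(3:ℝ)/2) * Real.exp (-t/8) * heatK t (Real.log w - Real.log z) *
        ((Real.sqrt z)⁻¹ * (1/2 + (Real.log w - Real.log z)/t))) z := by
  have hL : HasDerivAt (fun z : ℝ => Real.log w - Real.log z) (-z⁻¹) z :=
    (Real.hasDerivAt_log hz.ne').const_sub (Real.log w)
  have hH : HasDerivAt (fun z => heatK t (Real.log w - Real.log z))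
      (heatK t (Real.log w - Real.log z) * (-(Real.log w - Real.log z)/t) * (-z⁻¹)) z :=
    (heatK_hasDerivAt ht _).comp z hL
  have hs := Real.hasDerivAt_sqrt hz.ne'
  have h1 := ((hs.mul_const (Real.exp (-t/8))).mul hH).mul_const (w ^ (-(3:ℝ)/2))
  have hfun : (fun z => pGBM t w z)
      = fun z => Real.sqrt z * Real.exp (-t/8) * heatK t (Real.log w - Real.log z)
        * w ^ (-(3:ℝ)/2) := rfl
  rw [hfun]
  refine h1.congr_deriv ?_
  obtain ⟨s, hs0, rfl⟩ : ∃ s : ℝ, 0 < s ∧ z = s ^ 2 :=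
    ⟨Real.sqrt z, Real.sqrt_pos.2 hz, (Real.sq_sqrt hz.le).symm⟩
  rw [Real.sqrt_sq hs0.le]
  generalize heatK t (Real.log w - Real.log (s ^ 2)) = H
  generalize Real.log w - Real.log (s ^ 2) = L
  have hsne : s ≠ 0 := hs0.ne'
  field_simp

lemma F1_hasDerivAt (t w : ℝ) (ht : 0 < t) {z : ℝ} (hz : 0 < z) :
    HasDerivAt (fun z => w ^ (-(3:ℝ)/2) * Real.exp (-t/8) * heatK t (Real.log w - Real.log z) *
        ((Real.sqrt z)⁻¹ * (1/2 + (Real.log w - Real.log z)/t)))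
      (w ^ (-(3:ℝ)/2) * Real.exp (-t/8) * heatK t (Real.log w - Real.log z) *
        ((Real.sqrt z)⁻¹ * z⁻¹ *
          ((Real.log w - Real.log z)^2/t^2 - 1/t - 1/4))) z := by
  have hL : HasDerivAt (fun z : ℝ => Real.log w - Real.log z) (-z⁻¹) z :=
    (Real.hasDerivAt_log hz.ne').const_sub (Real.log w)
  have hH : HasDerivAt (fun z => heatK t (Real.log w - Real.log z))
      (heatK t (Real.log w - Real.log z) * (-(Real.log w - Real.log z)/t) * (-z⁻¹)) z :=
    (heatK_hasDerivAt ht _).comp z hL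
  have hsne : Real.sqrt z ≠ 0 := (Real.sqrt_pos.2 hz).ne'
  have hinv := (Real.hasDerivAt_sqrt hz.ne').inv hsne
  have h2 := (hL.div_const t).const_add (1/2 : ℝ)
  have h3 := hinv.mul h2
  have h4 := ((hH.const_mul (w ^ (-(3:ℝ)/2) * Real.exp (-t/8))).mul h3)
  have hfun : (fun z => w ^ (-(3:ℝ)/2) * Real.exp (-t/8) * heatK t (Real.log w - Real.log z) *
        ((Real.sqrt z)⁻¹ * (1/2 + (Real.log w - Real.log z)/t)))
      = fun z => (w ^ (-(3:ℝ)/2) * Real.exp (-t/8)) * heatK t (Real.log w - Real.log z) *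
        ((Real.sqrt z)⁻¹ * (1/2 + (Real.log w - Real.log z)/t)) := by
    funext z; ring
  rw [hfun]
  refine h4.congr_deriv ?_
  simp only [Pi.mul_apply, Pi.inv_apply]
  obtain ⟨s, hs0, rfl⟩ : ∃ s : ℝ, 0 < s ∧ z = s ^ 2 :=
    ⟨Real.sqrt z, Real.sqrt_pos.2 hz, (Real.sq_sqrt hz.le).symm⟩
  rw [Real.sqrt_sq hs0.le]
  generalize heatK t (Real.log w - Real.log (s ^ 2)) = H
  generalize Real.log w - Real.log (s ^ 2) = L
  have hsne' : s ≠ 0 := hs0.ne'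
  have htne : t ≠ 0 := ht.ne'
  field_simp
  ring

lemma g_eq (t x : ℝ) {v : ℝ} (hv : 0 < v) :
    v ^ 2 / 2 * pGBM t v x
      = (Real.sqrt x * Real.exp (-t/8) / 2) * (heatK t (Real.log v - Real.log x) * Real.sqrt v) := by
  have h : v ^ 2 * v ^ (-(3:ℝ)/2) = Real.sqrt v := by
    rw [← Real.rpow_natCast v 2, ← Real.rpow_add hv, Real.sqrt_eq_rpow]
    norm_num
  unfold pGBM
  linear_combination (Real.sqrt x * Real.exp (-t/8) * heatK t (Real.log v - Real.log x) / 2) * h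

lemma g_hasDerivAt (t x : ℝ) (ht : 0 < t) {v : ℝ} (hv : 0 < v) :
    HasDerivAt (fun v => (Real.sqrt x * Real.exp (-t/8) / 2)
        * (heatK t (Real.log v - Real.log x) * Real.sqrt v))
      ((Real.sqrt x * Real.exp (-t/8) / 2) * (heatK t (Real.log v - Real.log x)
        * ((Real.sqrt v)⁻¹ * (1/2 - (Real.log v - Real.log x)/t)))) v := by
  have hL : HasDerivAt (fun v : ℝ => Real.log v - Real.log x) v⁻¹ v :=
    (Real.hasDerivAt_log hv.ne').sub_const (Real.log x)
  have hH : HasDerivAt (fun v => heatK t (Real.log v - Real.log x))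
      (heatK t (Real.log v - Real.log x) * (-(Real.log v - Real.log x)/t) * v⁻¹) v :=
    (heatK_hasDerivAt ht _).comp v hL
  have h1 := (hH.mul (Real.hasDerivAt_sqrt hv.ne')).const_mul
      (Real.sqrt x * Real.exp (-t/8) / 2)
  refine h1.congr_deriv ?_
  obtain ⟨s, hs0, rfl⟩ : ∃ s : ℝ, 0 < s ∧ v = s ^ 2 :=
    ⟨Real.sqrt v, Real.sqrt_pos.2 hv, (Real.sq_sqrt hv.le).symm⟩
  rw [Real.sqrt_sq hs0.le]
  generalize heatK t (Real.log (s ^ 2) - Real.log x) = H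
  generalize Real.log (s ^ 2) - Real.log x = L
  have hsne : s ≠ 0 := hs0.ne'
  have htne : t ≠ 0 := ht.ne'
  field_simp
  ring

lemma G1_hasDerivAt (t x : ℝ) (ht : 0 < t) {v : ℝ} (hv : 0 < v) :
    HasDerivAt (fun v => (Real.sqrt x * Real.exp (-t/8) / 2) * (heatK t (Real.log v - Real.log x)
        * ((Real.sqrt v)⁻¹ * (1/2 - (Real.log v - Real.log x)/t))))
      ((Real.sqrt x * Real.exp (-t/8) / 2) * heatK t (Real.log v - Real.log x)
        * ((Real.sqrt v)⁻¹ * v⁻¹ *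
          ((Real.log v - Real.log x)^2/t^2 - 1/t - 1/4))) v := by
  have hL : HasDerivAt (fun v : ℝ => Real.log v - Real.log x) v⁻¹ v :=
    (Real.hasDerivAt_log hv.ne').sub_const (Real.log x)
  have hH : HasDerivAt (fun v => heatK t (Real.log v - Real.log x))
      (heatK t (Real.log v - Real.log x) * (-(Real.log v - Real.log x)/t) * v⁻¹) v :=
    (heatK_hasDerivAt ht _).comp v hL
  have hsne : Real.sqrt v ≠ 0 := (Real.sqrt_pos.2 hv).ne'
  have hinv := (Real.hasDerivAt_sqrt hv.ne').inv hsne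
  have h2 := (hL.div_const t).const_sub (1/2 : ℝ)
  have h3 := hinv.mul h2
  have h4 := (hH.mul h3).const_mul (Real.sqrt x * Real.exp (-t/8) / 2)
  refine h4.congr_deriv ?_
  simp only [Pi.mul_apply, Pi.inv_apply]
  obtain ⟨s, hs0, rfl⟩ : ∃ s : ℝ, 0 < s ∧ v = s ^ 2 :=
    ⟨Real.sqrt v, Real.sqrt_pos.2 hv, (Real.sq_sqrt hv.le).symm⟩
  rw [Real.sqrt_sq hs0.le]
  generalize heatK t (Real.log (s ^ 2) - Real.log x) = H
  generalize Real.log (s ^ 2) - Real.log x = L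
  have hsne' : s ≠ 0 := hs0.ne'
  have htne : t ≠ 0 := ht.ne'
  field_simp
  ring

/-- The adjoint identity for the GBM kernel: for all `t, w, x > 0`,
`(x²/2) ∂²_x p_GBM(t,w;x) = ∂²_w ((w²/2) p_GBM(t,w;x))`. -/
theorem pGBM_adjoint_identity (t w x : ℝ) (ht : 0 < t) (hw : 0 < w) (hx : 0 < x) :
    x ^ 2 / 2 * deriv (deriv (fun z => pGBM t w z)) x
      = deriv (deriv (fun v => v ^ 2 / 2 * pGBM t v x)) w := by
  -- x-side
  have hevx : deriv (fun z => pGBM t w z) =ᶠ[nhds x]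
      (fun z => w ^ (-(3:ℝ)/2) * Real.exp (-t/8) * heatK t (Real.log w - Real.log z) *
        ((Real.sqrt z)⁻¹ * (1/2 + (Real.log w - Real.log z)/t))) := by
    filter_upwards [eventually_gt_nhds hx] with z hz
    exact (pGBM_x_hasDerivAt t w ht hz).deriv
  have hx2 : deriv (deriv (fun z => pGBM t w z)) x
      = w ^ (-(3:ℝ)/2) * Real.exp (-t/8) * heatK t (Real.log w - Real.log x) *
        ((Real.sqrt x)⁻¹ * x⁻¹ * ((Real.log w - Real.log x)^2/t^2 - 1/t - 1/4)) := by
    rw [hevx.deriv_eq]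
    exact (F1_hasDerivAt t w ht hx).deriv
  -- w-side
  have hevw : deriv (fun v => v ^ 2 / 2 * pGBM t v x) =ᶠ[nhds w]
      (fun v => (Real.sqrt x * Real.exp (-t/8) / 2) * (heatK t (Real.log v - Real.log x)
        * ((Real.sqrt v)⁻¹ * (1/2 - (Real.log v - Real.log x)/t)))) := by
    filter_upwards [eventually_gt_nhds hw] with v hv
    have hev : (fun v => v ^ 2 / 2 * pGBM t v x) =ᶠ[nhds v]
        (fun v => (Real.sqrt x * Real.exp (-t/8) / 2)
          * (heatK t (Real.log v - Real.log x) * Real.sqrt v)) := by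
      filter_upwards [eventually_gt_nhds hv] with u hu
      exact g_eq t x hu
    rw [hev.deriv_eq]
    exact (g_hasDerivAt t x ht hv).deriv
  have hw2 : deriv (deriv (fun v => v ^ 2 / 2 * pGBM t v x)) w
      = (Real.sqrt x * Real.exp (-t/8) / 2) * heatK t (Real.log w - Real.log x) *
        ((Real.sqrt w)⁻¹ * w⁻¹ * ((Real.log w - Real.log x)^2/t^2 - 1/t - 1/4)) := by
    rw [hevw.deriv_eq]
    exact (G1_hasDerivAt t x ht hw).deriv
  rw [hx2, hw2]
  -- final arithmetic
  have hw32 : w ^ (-(3:ℝ)/2) = (Real.sqrt w)⁻¹ * w⁻¹ := by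
    rw [Real.sqrt_eq_rpow, ← Real.rpow_neg hw.le, ← Real.rpow_neg_one w, ← Real.rpow_add hw]
    norm_num
  rw [hw32]
  generalize heatK t (Real.log w - Real.log x) = H
  generalize Real.log w - Real.log x = L
  obtain ⟨s, hs0, rfl⟩ : ∃ s : ℝ, 0 < s ∧ x = s ^ 2 :=
    ⟨Real.sqrt x, Real.sqrt_pos.2 hx, (Real.sq_sqrt hx.le).symm⟩
  rw [Real.sqrt_sq hs0.le]
  have hsne : s ≠ 0 := hs0.ne'
  have htne : t ≠ 0 := ht.ne'
  have hwne : w ≠ 0 := hw.ne'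
  have hswne : Real.sqrt w ≠ 0 := (Real.sqrt_pos.2 hw).ne'
  field_simp
end
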